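/- arXiv:1505.03063 — 3 statements merged into one kernel-verified Lean document; each statement's English description precedes it below -/
import Mathlib

section
/- Under the standing assumptions on the 3-block Bregman ADMM, if the sequence {(x^k, y^k, z^k)} is bounded, then the sequence {L̂(ŵ^k)}_{k≥1} is nonincreasing and converges to a finite limit. -/
open RealInnerProductSpace Filter

noncomputable section

/-- Euclidean space `ℝ^n`. -/
abbrev Eu (n : ℕ) := EuclideanSpace ℝ (Fin n)

/-- The Bregman distance `Δ_φ(u,v) = φ(u) − φ(v) − ⟨∇φ(v), u−v⟩` associated with a
differentiable function `φ` whose gradient is `φ'`. -/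
def Breg {n : ℕ} (φ : Eu n → ℝ) (φ' : Eu n → Eu n) (u v : Eu n) : ℝ :=
  φ u - φ v - ⟪φ' v, u - v⟫

/-- `F` is `μ`-strongly convex iff `F − (μ/2)‖·‖²` is convex. -/
def StrongConvex {n : ℕ} (μ : ℝ) (F : Eu n → ℝ) : Prop :=
  ConvexOn ℝ Set.univ (fun u => F u - μ / 2 * ‖u‖ ^ 2)

/-- The augmented Lagrangian
`L_α(x,y,z,p) = f(x)+g(y)+h(z)+⟨p, Ax+By+Cz⟩+(α/2)‖Ax+By+Cz‖²`. -/
def Lag {n₁ n₂ n₃ m : ℕ} (f : Eu n₁ → ℝ) (g : Eu n₂ → ℝ) (h : Eu n₃ → ℝ)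
    (A : Eu n₁ →L[ℝ] Eu m) (B : Eu n₂ →L[ℝ] Eu m) (C : Eu n₃ →L[ℝ] Eu m)
    (α : ℝ) (x : Eu n₁) (y : Eu n₂) (z : Eu n₃) (p : Eu m) : ℝ :=
  f x + g y + h z + ⟪p, A x + B y + C z⟫ + α / 2 * ‖A x + B y + C z‖ ^ 2

lemma lsc_bddBelow_compact {n : ℕ} {f : Eu n → ℝ} (hf : LowerSemicontinuous f)
    (K : Set (Eu n)) (hK : IsCompact K) : ∃ c, ∀ x ∈ K, c ≤ f x := by
  have hcov : K ⊆ ⋃ c : ℝ, f ⁻¹' Set.Ioi c := by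
    intro x _; exact Set.mem_iUnion.2 ⟨f x - 1, by simp⟩
  obtain ⟨t, ht⟩ := hK.elim_finite_subcover (fun c : ℝ => f ⁻¹' Set.Ioi c)
    (fun c => hf.isOpen_preimage c) hcov
  rcases t.eq_empty_or_nonempty with rfl | hne
  · exact ⟨0, fun x hx => by simpa using ht hx⟩
  · refine ⟨t.min' hne, fun x hx => ?_⟩
    obtain ⟨c, hc, hxc⟩ := Set.mem_iUnion₂.1 (ht hx)
    exact le_trans (t.min'_le c hc) (le_of_lt hxc)

lemma hasGradientAt_of_fderiv {n : ℕ} {f : Eu n → ℝ} {D : Eu n →L[ℝ] ℝ} {G x : Eu n}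
    (hD : HasFDerivAt f D x) (h : ∀ v, D v = ⟪G, v⟫) : HasGradientAt f G x := by
  rw [hasGradientAt_iff_hasFDerivAt]
  have : (InnerProductSpace.toDual ℝ (Eu n)) G = D :=
    ContinuousLinearMap.ext fun v => by rw [h v]; simp [InnerProductSpace.toDual_apply_apply]
  rwa [this]

lemma grad_convex_le {n : ℕ} {φ : Eu n → ℝ} {gv : Eu n} {v : Eu n}
    (hc : ConvexOn ℝ Set.univ φ) (hg : HasGradientAt φ gv v) (u : Eu n) :
    φ v + ⟪gv, u - v⟫ ≤ φ u := by
  set ψ : ℝ → ℝ := fun t => φ (v + t • (u - v)) with hψ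
  have hline : ∀ t : ℝ, v + t • (u - v) = (AffineMap.lineMap v u) t := by
    intro t; simp [AffineMap.lineMap_apply]; module
  have hψconv : ConvexOn ℝ Set.univ ψ := by
    have := hc.comp_affineMap (AffineMap.lineMap v u)
    simp only [Set.preimage_univ] at this
    have hfun : ψ = φ ∘ ⇑(AffineMap.lineMap v u) := by
      funext t; simp [ψ, hline t, Function.comp]
    rw [hfun]; exact this
  have hder : HasDerivAt ψ ⟪gv, u - v⟫ 0 := by
    have hl : HasDerivAt (fun t : ℝ => v + t • (u - v)) (u - v) 0 := by
      simpa using ((hasDerivAt_id (0:ℝ)).smul_const (u - v)).const_add v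
    have hg' : HasFDerivAt φ ((InnerProductSpace.toDual ℝ (Eu n)) gv) (v + (0:ℝ) • (u - v)) := by
      simpa using hg.hasFDerivAt
    have := (hg'.comp_hasDerivAt 0 hl)
    exact (by simpa [InnerProductSpace.toDual_apply_apply] using this :
      HasDerivAt (φ ∘ fun t : ℝ => v + t • (u - v)) ⟪gv, u - v⟫ 0)
  have := hψconv.le_slope_of_hasDerivAt (Set.mem_univ 0) (Set.mem_univ 1) zero_lt_one hder
  have hs : slope ψ 0 1 = ψ 1 - ψ 0 := by simp [slope_def_field]
  rw [hs] at this
  have h1 : ψ 1 = φ u := by simp [ψ]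
  have h0 : ψ 0 = φ v := by simp [ψ]
  rw [h1, h0] at this
  linarith

lemma hasGradientAt_const_mul_norm_sq {n : ℕ} (c : ℝ) (v : Eu n) :
    HasGradientAt (fun u : Eu n => c * ‖u‖ ^ 2) ((2 * c) • v) v := by
  have h1 : HasFDerivAt (fun u : Eu n => ‖u‖ ^ 2) ((2 : ℝ) • (innerSL ℝ v)) v := by
    have h0 := (hasFDerivAt_id v).norm_sq
    simp only [id_eq] at h0
    have he : ((2:ℕ) • ((innerSL ℝ v).comp (ContinuousLinearMap.id ℝ (Eu n))))
        = ((2 : ℝ) • (innerSL ℝ v)) := by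
      ext w; simp
    rwa [he] at h0
  have h2 := h1.const_mul c
  refine hasGradientAt_of_fderiv h2 fun w => ?_
  simp [real_inner_smul_left, PiLp.inner_apply, Finset.mul_sum]
  ring_nf

lemma breg_nonneg {n : ℕ} {φ : Eu n → ℝ} {φ' : Eu n → Eu n}
    (hc : ConvexOn ℝ Set.univ φ) (hg : ∀ w, HasGradientAt φ (φ' w) w) (u v : Eu n) :
    0 ≤ Breg φ φ' u v := by
  have := grad_convex_le hc (hg v) u
  simp only [Breg]; linarith

lemma breg_ge {n : ℕ} {φ : Eu n → ℝ} {φ' : Eu n → Eu n} {μ : ℝ}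
    (hsc : StrongConvex μ φ) (hg : ∀ w, HasGradientAt φ (φ' w) w) (u v : Eu n) :
    μ / 2 * ‖u - v‖ ^ 2 ≤ Breg φ φ' u v := by
  set ψ : Eu n → ℝ := fun w => φ w - μ / 2 * ‖w‖ ^ 2 with hψ
  have hgψ : HasGradientAt ψ (φ' v - μ • v) v := by
    have h2 := hasGradientAt_const_mul_norm_sq (n := n) (μ / 2) v
    rw [show (2 * (μ/2)) = μ by ring] at h2
    rw [hasGradientAt_iff_hasFDerivAt, map_sub]
    exact (hg v).hasFDerivAt.sub h2.hasFDerivAt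
  have := grad_convex_le hsc hgψ u
  simp only [ψ, inner_sub_left, real_inner_smul_left] at this
  have hexp : ‖u - v‖ ^ 2 = ‖u‖ ^ 2 - 2 * ⟪v, u - v⟫ - ‖v‖ ^ 2 := by
    rw [norm_sub_sq_real, inner_sub_right, real_inner_self_eq_norm_sq]
    rw [real_inner_comm v u]; ring
  have h3 : μ / 2 * ‖u - v‖ ^ 2 = μ/2*‖u‖^2 - μ*⟪v, u-v⟫ - μ/2*‖v‖^2 := by
    rw [hexp]; ring
  simp only [Breg]
  linarith

lemma strongConvex_min {n : ℕ} {μ : ℝ} (hμ : 0 < μ) {F : Eu n → ℝ} (hF : StrongConvex μ F)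
    {a : Eu n} (hmin : ∀ w, F a ≤ F w) (u : Eu n) :
    F a + μ / 2 * ‖u - a‖ ^ 2 ≤ F u := by
  have h' : StrongConvexOn Set.univ μ F := strongConvexOn_iff_convex.2 hF
  set c := μ / 2 * ‖u - a‖ ^ 2 with hc
  have hc0 : 0 ≤ c := by positivity
  rcases eq_or_lt_of_le hc0 with hc' | hc'
  · have := hmin u; linarith
  refine le_of_forall_pos_le_add fun ε hε => ?_
  set t := min (1/2 : ℝ) (ε / c) with ht
  have ht0 : 0 < t := by positivity
  have ht1 : t ≤ 1/2 := min_le_left _ _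
  have key := h'.2 (Set.mem_univ u) (Set.mem_univ a) (le_of_lt ht0)
    (by linarith : (0:ℝ) ≤ 1 - t) (by ring)
  have hmin' := hmin (t • u + (1 - t) • a)
  simp only [smul_eq_mul] at key
  have htc : t * c ≤ ε := by
    calc t * c ≤ (ε / c) * c := by
          apply mul_le_mul_of_nonneg_right (min_le_right _ _) hc0
      _ = ε := by field_simp
  rw [← hc] at key
  have h4 : t * (F a + (1 - t) * c) ≤ t * F u := by nlinarith [key, hmin']
  have h5 : F a + (1 - t) * c ≤ F u := le_of_mul_le_mul_left h4 ht0
  nlinarith [htc]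

lemma convexOn_inner_affine {n m : ℕ} (p w : Eu m) (A : Eu n →L[ℝ] Eu m) :
    ConvexOn ℝ Set.univ (fun ξ : Eu n => ⟪p, A ξ + w⟫) := by
  refine ⟨convex_univ, fun x _ y _ a b ha hb hab => ?_⟩
  simp only [smul_eq_mul, map_add, map_smul, inner_add_right, inner_smul_right]
  have : (⟪p, w⟫ : ℝ) = a * ⟪p, w⟫ + b * ⟪p, w⟫ := by rw [← add_mul, hab, one_mul]
  linarith

lemma convexOn_norm_sq {m : ℕ} : ConvexOn ℝ Set.univ (fun u : Eu m => ‖u‖ ^ 2) := by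
  refine ⟨convex_univ, fun x _ y _ a b ha hb hab => ?_⟩
  simp only [smul_eq_mul]
  have h1 : ‖a • x + b • y‖ ^ 2 = a^2*‖x‖^2 + 2*(a*b)*⟪x,y⟫ + b^2*‖y‖^2 := by
    rw [norm_add_sq_real, norm_smul, norm_smul, real_inner_smul_left, inner_smul_right,
      Real.norm_of_nonneg ha, Real.norm_of_nonneg hb, mul_pow, mul_pow]
    ring
  have h2 : (0:ℝ) ≤ ‖x - y‖ ^ 2 := sq_nonneg _
  rw [norm_sub_sq_real] at h2
  nlinarith [mul_nonneg ha hb]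

lemma convexOn_norm_sq_affine {n m : ℕ} {c : ℝ} (hc : 0 ≤ c) (w : Eu m) (A : Eu n →L[ℝ] Eu m) :
    ConvexOn ℝ Set.univ (fun ξ : Eu n => c * ‖A ξ + w‖ ^ 2) := by
  refine ⟨convex_univ, fun x _ y _ a b ha hb hab => ?_⟩
  have hpt : A (a • x + b • y) + w = a • (A x + w) + b • (A y + w) := by
    simp only [map_add, map_smul, smul_add]
    conv_lhs => rw [show w = a • w + b • w by rw [← add_smul, hab, one_smul]]
    module
  have := convexOn_norm_sq.2 (Set.mem_univ (A x + w)) (Set.mem_univ (A y + w)) ha hb hab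
  simp only [smul_eq_mul] at this ⊢
  rw [hpt]
  nlinarith [this]

lemma convexOn_breg {n : ℕ} {φ : Eu n → ℝ} {φ' : Eu n → Eu n}
    (hc : ConvexOn ℝ Set.univ φ) (v : Eu n) :
    ConvexOn ℝ Set.univ (fun ξ => Breg φ φ' ξ v) := by
  have haff : ConvexOn ℝ Set.univ (fun ξ : Eu n => -φ v - ⟪φ' v, ξ - v⟫) := by
    refine ⟨convex_univ, fun x _ y _ a b ha hb hab => ?_⟩
    simp only [smul_eq_mul, inner_sub_right, inner_add_right, inner_smul_right]
    have h1 : (φ v) = a * φ v + b * φ v := by rw [← add_mul, hab, one_mul]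
    have h2 : (⟪φ' v, v⟫ : ℝ) = a * ⟪φ' v, v⟫ + b * ⟪φ' v, v⟫ := by
      rw [← add_mul, hab, one_mul]
    linarith
  have := hc.add haff
  have hfun : (fun ξ => Breg φ φ' ξ v) = φ + fun ξ => -φ v - ⟪φ' v, ξ - v⟫ := by
    funext ξ; simp [Breg]; ring
  rw [hfun]; exact this

lemma generic_descent {n : ℕ} {μ : ℝ} (hμ : 0 < μ)
    {f R : Eu n → ℝ} {φ : Eu n → ℝ} {φ' : Eu n → Eu n} {v a : Eu n}
    (hRconv : ConvexOn ℝ Set.univ R)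
    (hφc : ConvexOn ℝ Set.univ φ)
    (hφg : ∀ w, HasGradientAt φ (φ' w) w)
    (hsc : StrongConvex μ f ∨ StrongConvex μ φ)
    (hmin : ∀ ξ, f a + R a + Breg φ φ' a v ≤ f ξ + R ξ + Breg φ φ' ξ v) :
    f a + R a + μ / 2 * ‖a - v‖ ^ 2 ≤ f v + R v := by
  rcases hsc with hsc | hsc
  · -- f strongly convex
    set F : Eu n → ℝ := fun ξ => f ξ + R ξ + Breg φ φ' ξ v with hF
    have hFsc : StrongConvex μ F := by
      have hconv := (hRconv.add (convexOn_breg (φ' := φ') hφc v)).add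
        (hsc : ConvexOn ℝ Set.univ fun u => f u - μ / 2 * ‖u‖ ^ 2)
      unfold StrongConvex
      have hfun : (fun u => F u - μ / 2 * ‖u‖ ^ 2) =
          ((R + fun ξ => Breg φ φ' ξ v) + fun u => f u - μ / 2 * ‖u‖ ^ 2) := by
        funext ξ; simp [F]; ring
      rw [hfun]; exact hconv
    have hQG := strongConvex_min hμ hFsc hmin v
    have hBa : 0 ≤ Breg φ φ' a v := breg_nonneg hφc hφg a v
    have hBv : Breg φ φ' v v = 0 := by simp [Breg]
    simp only [F, hBv] at hQG
    rw [norm_sub_rev] at hQG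
    linarith
  · -- φ strongly convex
    have h1 := hmin v
    have hBv : Breg φ φ' v v = 0 := by simp [Breg]
    have hBa := breg_ge hsc hφg a v
    rw [hBv] at h1
    linarith

lemma z_opt_gradient {n₃ m : ℕ} {h φ₃ : Eu n₃ → ℝ} {h' φ₃' : Eu n₃ → Eu n₃}
    (C : Eu n₃ →L[ℝ] Eu m) (α : ℝ) (w p : Eu m) (zk ζ : Eu n₃)
    (hgh : HasGradientAt h (h' ζ) ζ) (hgφ : HasGradientAt φ₃ (φ₃' ζ) ζ) :
    HasGradientAt
      (fun ξ => h ξ + ⟪p, w + C ξ⟫ + α / 2 * ‖w + C ξ‖ ^ 2 + Breg φ₃ φ₃' ξ zk)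
      (h' ζ + (ContinuousLinearMap.adjoint C) p
        + α • (ContinuousLinearMap.adjoint C) (w + C ζ) + (φ₃' ζ - φ₃' zk)) ζ := by
  have hlin : HasFDerivAt (fun ξ : Eu n₃ => w + C ξ) (C : Eu n₃ →L[ℝ] Eu m) ζ := by
    simpa using (C.hasFDerivAt (x := ζ)).const_add w
  have t2 : HasFDerivAt (fun ξ : Eu n₃ => (⟪p, w + C ξ⟫ : ℝ))
      ((fderivInnerCLM ℝ (p, w + C ζ)).comp
        ((0 : Eu n₃ →L[ℝ] Eu m).prod C)) ζ :=
    (hasFDerivAt_const p ζ).inner ℝ hlin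
  have t3 : HasFDerivAt (fun ξ : Eu n₃ => α / 2 * ‖w + C ξ‖ ^ 2)
      ((α / 2) • ((2:ℕ) • (innerSL ℝ (w + C ζ)).comp (C : Eu n₃ →L[ℝ] Eu m))) ζ :=
    hlin.norm_sq.const_mul (α / 2)
  have t6 : HasFDerivAt (fun ξ : Eu n₃ => (⟪φ₃' zk, ξ - zk⟫ : ℝ))
      ((fderivInnerCLM ℝ (φ₃' zk, ζ - zk)).comp
        ((0 : Eu n₃ →L[ℝ] Eu n₃).prod (ContinuousLinearMap.id ℝ (Eu n₃)))) ζ :=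
    (hasFDerivAt_const (φ₃' zk) ζ).inner ℝ ((hasFDerivAt_id ζ).sub_const zk)
  have tfull := ((((hgh.hasFDerivAt.add t2).add t3).add
    ((hgφ.hasFDerivAt.sub (hasFDerivAt_const (φ₃ zk) ζ)).sub t6)) : HasFDerivAt _ _ ζ)
  refine hasGradientAt_of_fderiv (by exact tfull) fun v => ?_
  simp only [ContinuousLinearMap.add_apply, ContinuousLinearMap.coe_comp',
    Function.comp_apply, ContinuousLinearMap.prod_apply, ContinuousLinearMap.zero_apply,
    ContinuousLinearMap.coe_smul', Pi.smul_apply, ContinuousLinearMap.smul_apply,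
    fderivInnerCLM_apply, ContinuousLinearMap.sub_apply, ContinuousLinearMap.id_apply,
    InnerProductSpace.toDual_apply_apply, inner_add_left, inner_sub_left, inner_zero_left,
    real_inner_smul_left, ContinuousLinearMap.adjoint_inner_left, smul_eq_mul,
    nsmul_eq_mul, Nat.cast_ofNat, real_inner_comm (w + C ζ) (C v)]
  simp only [innerSL_apply_apply, inner_add_left]
  ring

/-- All the data and standing assumptions of the 3-block Bregman ADMM:
objective functions `f, g, h`, Bregman kernels `φ₁, φ₂, φ₃` (with gradients
`φ₁', φ₂', φ₃'`, and `h'` the gradient of `h`), matrices `A, B, C` (as linear maps),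
parameters, iterate sequences `x, y, z, p`, and the standing hypotheses
(lower semicontinuity of `f, g`; differentiability with Lipschitz gradients;
convexity of kernels; the strong-convexity alternatives; quantitative full row rank
of `C`; the lower bound on `α`; and the BADMM update rules, where each of the three
primal updates is a global minimizer of the corresponding subproblem). -/
structure BADMM (n₁ n₂ n₃ m : ℕ) where
  f : Eu n₁ → ℝ
  g : Eu n₂ → ℝ
  h : Eu n₃ → ℝ
  φ₁ : Eu n₁ → ℝ
  φ₂ : Eu n₂ → ℝ
  φ₃ : Eu n₃ → ℝ
  h' : Eu n₃ → Eu n₃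
  φ₁' : Eu n₁ → Eu n₁
  φ₂' : Eu n₂ → Eu n₂
  φ₃' : Eu n₃ → Eu n₃
  A : Eu n₁ →L[ℝ] Eu m
  B : Eu n₂ →L[ℝ] Eu m
  C : Eu n₃ →L[ℝ] Eu m
  α : ℝ
  ℓh : ℝ
  ℓ₁ : ℝ
  ℓ₂ : ℝ
  ℓ₃ : ℝ
  μ₁ : ℝ
  μ₂ : ℝ
  μ₃ : ℝ
  σC : ℝ
  x : ℕ → Eu n₁
  y : ℕ → Eu n₂
  z : ℕ → Eu n₃
  p : ℕ → Eu m
  hα_pos : 0 < α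
  hf_lsc : LowerSemicontinuous f
  hg_lsc : LowerSemicontinuous g
  hgrad_h : ∀ v, HasGradientAt h (h' v) v
  hgrad_φ₁ : ∀ v, HasGradientAt φ₁ (φ₁' v) v
  hgrad_φ₂ : ∀ v, HasGradientAt φ₂ (φ₂' v) v
  hgrad_φ₃ : ∀ v, HasGradientAt φ₃ (φ₃' v) v
  hℓh_nonneg : 0 ≤ ℓh
  hℓ₁_nonneg : 0 ≤ ℓ₁
  hℓ₂_nonneg : 0 ≤ ℓ₂
  hℓ₃_nonneg : 0 ≤ ℓ₃
  hlip_h : ∀ a b, ‖h' a - h' b‖ ≤ ℓh * ‖a - b‖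
  hlip_φ₁ : ∀ a b, ‖φ₁' a - φ₁' b‖ ≤ ℓ₁ * ‖a - b‖
  hlip_φ₂ : ∀ a b, ‖φ₂' a - φ₂' b‖ ≤ ℓ₂ * ‖a - b‖
  hlip_φ₃ : ∀ a b, ‖φ₃' a - φ₃' b‖ ≤ ℓ₃ * ‖a - b‖
  hφ₁_convex : ConvexOn ℝ Set.univ φ₁
  hφ₂_convex : ConvexOn ℝ Set.univ φ₂
  hφ₃_convex : ConvexOn ℝ Set.univ φ₃
  hμ₁_pos : 0 < μ₁
  hμ₂_pos : 0 < μ₂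
  hμ₃_pos : 0 < μ₃
  hsc₁ : StrongConvex μ₁ f ∨ StrongConvex μ₁ φ₁
  hsc₂ : StrongConvex μ₂ g ∨ StrongConvex μ₂ φ₂
  hsc₃ : StrongConvex μ₃ h ∨ StrongConvex μ₃ φ₃
  hσC_pos : 0 < σC
  hC_rank : ∀ u : Eu m, σC * ‖u‖ ^ 2 ≤ ‖(ContinuousLinearMap.adjoint C) u‖ ^ 2
  hα_large : 4 * ((ℓh + ℓ₃) ^ 2 + ℓ₃ ^ 2) / (μ₃ * σC) < α
  hx_min : ∀ k, ∀ ξ : Eu n₁,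
    Lag f g h A B C α (x (k+1)) (y k) (z k) (p k) + Breg φ₁ φ₁' (x (k+1)) (x k) ≤
      Lag f g h A B C α ξ (y k) (z k) (p k) + Breg φ₁ φ₁' ξ (x k)
  hy_min : ∀ k, ∀ ξ : Eu n₂,
    Lag f g h A B C α (x (k+1)) (y (k+1)) (z k) (p k) + Breg φ₂ φ₂' (y (k+1)) (y k) ≤
      Lag f g h A B C α (x (k+1)) ξ (z k) (p k) + Breg φ₂ φ₂' ξ (y k)
  hz_min : ∀ k, ∀ ξ : Eu n₃,
    Lag f g h A B C α (x (k+1)) (y (k+1)) (z (k+1)) (p k) + Breg φ₃ φ₃' (z (k+1)) (z k) ≤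
      Lag f g h A B C α (x (k+1)) (y (k+1)) ξ (p k) + Breg φ₃ φ₃' ξ (z k)
  hp_upd : ∀ k, p (k+1) = p k + α • (A (x (k+1)) + B (y (k+1)) + C (z (k+1)))

namespace BADMM

variable {n₁ n₂ n₃ m : ℕ} (P : BADMM n₁ n₂ n₃ m)

/-- `σ₀ = 2ℓ₃²/(ασ_C)`. -/
def σ0 : ℝ := 2 * P.ℓ₃ ^ 2 / (P.α * P.σC)

/-- `σ₁ = (1/2)·min(μ₁, μ₂, μ₃ − 4(ℓ_h+ℓ₃)²/(ασ_C) − 4ℓ₃²/(ασ_C))`. -/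
def σ1 : ℝ :=
  (1 / 2) * min P.μ₁ (min P.μ₂
    (P.μ₃ - 4 * (P.ℓh + P.ℓ₃) ^ 2 / (P.α * P.σC) - 4 * P.ℓ₃ ^ 2 / (P.α * P.σC)))

/-- The augmented Lagrangian of the problem, `L_α`. -/
def L (x : Eu n₁) (y : Eu n₂) (z : Eu n₃) (p : Eu m) : ℝ :=
  Lag P.f P.g P.h P.A P.B P.C P.α x y z p

/-- `L̂(x,y,z,p,ẑ) = L_α(x,y,z,p) + σ₀‖z−ẑ‖²`. -/
def Lhat (x : Eu n₁) (y : Eu n₂) (z : Eu n₃) (p : Eu m) (zh : Eu n₃) : ℝ :=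
  P.L x y z p + P.σ0 * ‖z - zh‖ ^ 2

/-- `‖w^{k+1}−w^k‖²`. -/
def dw2 (k : ℕ) : ℝ :=
  ‖P.x (k+1) - P.x k‖ ^ 2 + ‖P.y (k+1) - P.y k‖ ^ 2 +
    ‖P.z (k+1) - P.z k‖ ^ 2 + ‖P.p (k+1) - P.p k‖ ^ 2

end BADMM


section MainLemmas

variable {n₁ n₂ n₃ m : ℕ} (P : BADMM n₁ n₂ n₃ m)

lemma badmm_key_opt (k : ℕ) :
    (ContinuousLinearMap.adjoint P.C) (P.p (k+1)) =
      P.φ₃' (P.z k) - P.h' (P.z (k+1)) - P.φ₃' (P.z (k+1)) := by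
  set w := P.A (P.x (k+1)) + P.B (P.y (k+1)) with hw
  set ζ := P.z (k+1) with hζ
  set Φ : Eu n₃ → ℝ := fun ξ =>
    P.h ξ + ⟪P.p k, w + P.C ξ⟫ + P.α / 2 * ‖w + P.C ξ‖ ^ 2 + Breg P.φ₃ P.φ₃' ξ (P.z k)
    with hΦ
  have hmin : ∀ ξ, Φ ζ ≤ Φ ξ := by
    intro ξ
    have h0 := P.hz_min k ξ
    simp only [Lag] at h0
    simp only [Φ, hw]
    linarith
  have hgrad := z_opt_gradient P.C P.α w (P.p k) (P.z k) ζ (P.hgrad_h ζ) (P.hgrad_φ₃ ζ)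
  have hloc : IsLocalMin Φ ζ := Filter.Eventually.of_forall hmin
  have h0 := hloc.hasFDerivAt_eq_zero hgrad.hasFDerivAt
  have hG : P.h' ζ + (ContinuousLinearMap.adjoint P.C) (P.p k)
      + P.α • (ContinuousLinearMap.adjoint P.C) (w + P.C ζ) + (P.φ₃' ζ - P.φ₃' (P.z k)) = 0 := by
    have := congrArg (InnerProductSpace.toDual ℝ (Eu n₃)).symm h0
    simpa using this
  have hp := P.hp_upd k
  rw [show P.A (P.x (k+1)) + P.B (P.y (k+1)) + P.C (P.z (k+1)) = w + P.C ζ from rfl] at hp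
  rw [hp, map_add, map_smul, ← sub_eq_zero, ← hG]
  abel

lemma badmm_Lx (k : ℕ) :
    P.L (P.x (k+1)) (P.y k) (P.z k) (P.p k) + P.μ₁ / 2 * ‖P.x (k+1) - P.x k‖ ^ 2 ≤
      P.L (P.x k) (P.y k) (P.z k) (P.p k) := by
  set w := P.B (P.y k) + P.C (P.z k) with hwdef
  have harg : ∀ ξ : Eu n₁, P.A ξ + P.B (P.y k) + P.C (P.z k) = P.A ξ + w := fun ξ => by
    rw [hwdef, add_assoc]
  have hR : ConvexOn ℝ Set.univ (fun ξ : Eu n₁ =>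
      (P.g (P.y k) + P.h (P.z k)) + ⟪P.p k, P.A ξ + w⟫ + P.α / 2 * ‖P.A ξ + w‖ ^ 2) := by
    have h1 := (convexOn_const (P.g (P.y k) + P.h (P.z k)) convex_univ).add
      (convexOn_inner_affine (P.p k) w P.A)
    have h2 := h1.add (convexOn_norm_sq_affine (by have := P.hα_pos; positivity : (0:ℝ) ≤ P.α / 2) w P.A)
    convert h2 using 1 <;> rfl
  have hmin : ∀ ξ : Eu n₁,
      P.f (P.x (k+1)) + ((P.g (P.y k) + P.h (P.z k)) + ⟪P.p k, P.A (P.x (k+1)) + w⟫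
        + P.α / 2 * ‖P.A (P.x (k+1)) + w‖ ^ 2) + Breg P.φ₁ P.φ₁' (P.x (k+1)) (P.x k) ≤
      P.f ξ + ((P.g (P.y k) + P.h (P.z k)) + ⟪P.p k, P.A ξ + w⟫
        + P.α / 2 * ‖P.A ξ + w‖ ^ 2) + Breg P.φ₁ P.φ₁' ξ (P.x k) := by
    intro ξ
    have h0 := P.hx_min k ξ
    simp only [Lag, harg] at h0
    linarith
  have h2 := generic_descent (f := P.f)
    (R := fun ξ => (P.g (P.y k) + P.h (P.z k)) + ⟪P.p k, P.A ξ + w⟫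
        + P.α / 2 * ‖P.A ξ + w‖ ^ 2)
    P.hμ₁_pos hR P.hφ₁_convex P.hgrad_φ₁ P.hsc₁ hmin
  simp only [BADMM.L, Lag, harg]
  linarith

lemma badmm_Ly (k : ℕ) :
    P.L (P.x (k+1)) (P.y (k+1)) (P.z k) (P.p k) + P.μ₂ / 2 * ‖P.y (k+1) - P.y k‖ ^ 2 ≤
      P.L (P.x (k+1)) (P.y k) (P.z k) (P.p k) := by
  set w := P.A (P.x (k+1)) + P.C (P.z k) with hwdef
  have harg : ∀ ξ : Eu n₂, P.A (P.x (k+1)) + P.B ξ + P.C (P.z k) = P.B ξ + w := fun ξ => by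
    rw [hwdef]; module
  have hR : ConvexOn ℝ Set.univ (fun ξ : Eu n₂ =>
      (P.f (P.x (k+1)) + P.h (P.z k)) + ⟪P.p k, P.B ξ + w⟫ + P.α / 2 * ‖P.B ξ + w‖ ^ 2) := by
    have h1 := (convexOn_const (P.f (P.x (k+1)) + P.h (P.z k)) convex_univ).add
      (convexOn_inner_affine (P.p k) w P.B)
    have h2 := h1.add (convexOn_norm_sq_affine (by have := P.hα_pos; positivity : (0:ℝ) ≤ P.α / 2) w P.B)
    convert h2 using 1 <;> rfl
  have hmin : ∀ ξ : Eu n₂,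
      P.g (P.y (k+1)) + ((P.f (P.x (k+1)) + P.h (P.z k)) + ⟪P.p k, P.B (P.y (k+1)) + w⟫
        + P.α / 2 * ‖P.B (P.y (k+1)) + w‖ ^ 2) + Breg P.φ₂ P.φ₂' (P.y (k+1)) (P.y k) ≤
      P.g ξ + ((P.f (P.x (k+1)) + P.h (P.z k)) + ⟪P.p k, P.B ξ + w⟫
        + P.α / 2 * ‖P.B ξ + w‖ ^ 2) + Breg P.φ₂ P.φ₂' ξ (P.y k) := by
    intro ξ
    have h0 := P.hy_min k ξ
    simp only [Lag, harg] at h0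
    linarith
  have h2 := generic_descent (f := P.g)
    (R := fun ξ => (P.f (P.x (k+1)) + P.h (P.z k)) + ⟪P.p k, P.B ξ + w⟫
        + P.α / 2 * ‖P.B ξ + w‖ ^ 2)
    P.hμ₂_pos hR P.hφ₂_convex P.hgrad_φ₂ P.hsc₂ hmin
  simp only [BADMM.L, Lag, harg]
  linarith

lemma badmm_Lz (k : ℕ) :
    P.L (P.x (k+1)) (P.y (k+1)) (P.z (k+1)) (P.p k) + P.μ₃ / 2 * ‖P.z (k+1) - P.z k‖ ^ 2 ≤
      P.L (P.x (k+1)) (P.y (k+1)) (P.z k) (P.p k) := by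
  set w := P.A (P.x (k+1)) + P.B (P.y (k+1)) with hwdef
  have harg : ∀ ξ : Eu n₃, P.A (P.x (k+1)) + P.B (P.y (k+1)) + P.C ξ = P.C ξ + w := fun ξ => by
    rw [hwdef]; module
  have hR : ConvexOn ℝ Set.univ (fun ξ : Eu n₃ =>
      (P.f (P.x (k+1)) + P.g (P.y (k+1))) + ⟪P.p k, P.C ξ + w⟫ + P.α / 2 * ‖P.C ξ + w‖ ^ 2) := by
    have h1 := (convexOn_const (P.f (P.x (k+1)) + P.g (P.y (k+1))) convex_univ).add
      (convexOn_inner_affine (P.p k) w P.C)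
    have h2 := h1.add (convexOn_norm_sq_affine (by have := P.hα_pos; positivity : (0:ℝ) ≤ P.α / 2) w P.C)
    convert h2 using 1 <;> rfl
  have hmin : ∀ ξ : Eu n₃,
      P.h (P.z (k+1)) + ((P.f (P.x (k+1)) + P.g (P.y (k+1))) + ⟪P.p k, P.C (P.z (k+1)) + w⟫
        + P.α / 2 * ‖P.C (P.z (k+1)) + w‖ ^ 2) + Breg P.φ₃ P.φ₃' (P.z (k+1)) (P.z k) ≤
      P.h ξ + ((P.f (P.x (k+1)) + P.g (P.y (k+1))) + ⟪P.p k, P.C ξ + w⟫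
        + P.α / 2 * ‖P.C ξ + w‖ ^ 2) + Breg P.φ₃ P.φ₃' ξ (P.z k) := by
    intro ξ
    have h0 := P.hz_min k ξ
    simp only [Lag, harg] at h0
    linarith
  have h2 := generic_descent (f := P.h)
    (R := fun ξ => (P.f (P.x (k+1)) + P.g (P.y (k+1))) + ⟪P.p k, P.C ξ + w⟫
        + P.α / 2 * ‖P.C ξ + w‖ ^ 2)
    P.hμ₃_pos hR P.hφ₃_convex P.hgrad_φ₃ P.hsc₃ hmin
  simp only [BADMM.L, Lag, harg]
  linarith

lemma badmm_Lp (k : ℕ) :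
    P.L (P.x (k+1)) (P.y (k+1)) (P.z (k+1)) (P.p (k+1)) =
      P.L (P.x (k+1)) (P.y (k+1)) (P.z (k+1)) (P.p k) +
        P.α * ‖P.A (P.x (k+1)) + P.B (P.y (k+1)) + P.C (P.z (k+1))‖ ^ 2 := by
  simp only [BADMM.L, Lag]
  set r := P.A (P.x (k+1)) + P.B (P.y (k+1)) + P.C (P.z (k+1)) with hr
  have h1 : P.p (k+1) = P.p k + P.α • r := P.hp_upd k
  rw [h1, inner_add_left, real_inner_smul_left, real_inner_self_eq_norm_sq]
  ring

lemma badmm_dp_bound (k : ℕ) :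
    P.σC * ‖P.p (k+2) - P.p (k+1)‖ ^ 2 ≤
      2 * (P.ℓh + P.ℓ₃) ^ 2 * ‖P.z (k+2) - P.z (k+1)‖ ^ 2 +
        2 * P.ℓ₃ ^ 2 * ‖P.z (k+1) - P.z k‖ ^ 2 := by
  have hC := P.hC_rank (P.p (k+2) - P.p (k+1))
  have hkey : (ContinuousLinearMap.adjoint P.C) (P.p (k+2) - P.p (k+1)) =
      -((P.h' (P.z (k+2)) - P.h' (P.z (k+1))) + (P.φ₃' (P.z (k+2)) - P.φ₃' (P.z (k+1))))
        + (P.φ₃' (P.z (k+1)) - P.φ₃' (P.z k)) := by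
    rw [map_sub, badmm_key_opt P (k+1), badmm_key_opt P k]
    abel
  set s := ‖P.z (k+2) - P.z (k+1)‖ with hs
  set t := ‖P.z (k+1) - P.z k‖ with htdef
  have hnorm : ‖(ContinuousLinearMap.adjoint P.C) (P.p (k+2) - P.p (k+1))‖ ≤
      (P.ℓh + P.ℓ₃) * s + P.ℓ₃ * t := by
    rw [hkey]
    calc ‖_ + (P.φ₃' (P.z (k+1)) - P.φ₃' (P.z k))‖
        ≤ ‖-((P.h' (P.z (k+2)) - P.h' (P.z (k+1))) + (P.φ₃' (P.z (k+2)) - P.φ₃' (P.z (k+1))))‖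
          + ‖P.φ₃' (P.z (k+1)) - P.φ₃' (P.z k)‖ := norm_add_le _ _
      _ ≤ (‖P.h' (P.z (k+2)) - P.h' (P.z (k+1))‖ + ‖P.φ₃' (P.z (k+2)) - P.φ₃' (P.z (k+1))‖)
          + ‖P.φ₃' (P.z (k+1)) - P.φ₃' (P.z k)‖ := by
            rw [norm_neg]; gcongr; exact norm_add_le _ _
      _ ≤ (P.ℓh * s + P.ℓ₃ * s) + P.ℓ₃ * t := by
            gcongr <;> [exact P.hlip_h _ _; exact P.hlip_φ₃ _ _; exact P.hlip_φ₃ _ _]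
      _ = (P.ℓh + P.ℓ₃) * s + P.ℓ₃ * t := by ring
  have hsq : ‖(ContinuousLinearMap.adjoint P.C) (P.p (k+2) - P.p (k+1))‖ ^ 2 ≤
      ((P.ℓh + P.ℓ₃) * s + P.ℓ₃ * t) ^ 2 :=
    pow_le_pow_left₀ (norm_nonneg _) hnorm 2
  have hfinal : ((P.ℓh + P.ℓ₃) * s + P.ℓ₃ * t) ^ 2 ≤
      2 * (P.ℓh + P.ℓ₃) ^ 2 * s ^ 2 + 2 * P.ℓ₃ ^ 2 * t ^ 2 := by
    nlinarith [sq_nonneg ((P.ℓh + P.ℓ₃) * s - P.ℓ₃ * t)]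
  linarith

lemma badmm_Lhat_descent (k : ℕ) :
    P.Lhat (P.x (k+2)) (P.y (k+2)) (P.z (k+2)) (P.p (k+2)) (P.z (k+1)) ≤
      P.Lhat (P.x (k+1)) (P.y (k+1)) (P.z (k+1)) (P.p (k+1)) (P.z k) := by
  have hα := P.hα_pos
  have hσC := P.hσC_pos
  have hx := badmm_Lx P (k+1)
  have hy := badmm_Ly P (k+1)
  have hz := badmm_Lz P (k+1)
  have hp := badmm_Lp P (k+1)
  have hdp := badmm_dp_bound P k
  -- relate residual to dual difference
  have hres : P.α * ‖P.A (P.x (k+2)) + P.B (P.y (k+2)) + P.C (P.z (k+2))‖ ^ 2 =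
      ‖P.p (k+2) - P.p (k+1)‖ ^ 2 / P.α := by
    have h1 : P.p (k+2) - P.p (k+1)
        = P.α • (P.A (P.x (k+2)) + P.B (P.y (k+2)) + P.C (P.z (k+2))) := by
      rw [P.hp_upd (k+1)]; abel
    rw [h1, norm_smul, Real.norm_of_nonneg hα.le, mul_pow]
    field_simp
  have hcoef : 2 * (P.ℓh + P.ℓ₃) ^ 2 / (P.α * P.σC) + 2 * P.ℓ₃ ^ 2 / (P.α * P.σC) ≤ P.μ₃ / 2 := by
    have hlarge := P.hα_large
    have hμ₃ := P.hμ₃_pos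
    have hα := P.hα_pos
    have hσC := P.hσC_pos
    rw [div_lt_iff₀ (by positivity)] at hlarge
    rw [← add_div, div_le_iff₀ (by positivity)]
    nlinarith [P.hμ₃_pos, sq_nonneg (P.ℓh + P.ℓ₃), sq_nonneg P.ℓ₃]
  have hdp' : ‖P.p (k+2) - P.p (k+1)‖ ^ 2 / P.α ≤
      (2 * (P.ℓh + P.ℓ₃) ^ 2 * ‖P.z (k+2) - P.z (k+1)‖ ^ 2 +
        2 * P.ℓ₃ ^ 2 * ‖P.z (k+1) - P.z k‖ ^ 2) / (P.α * P.σC) := by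
    rw [div_le_div_iff₀ hα (by positivity)]
    calc ‖P.p (k+2) - P.p (k+1)‖ ^ 2 * (P.α * P.σC)
        = (P.σC * ‖P.p (k+2) - P.p (k+1)‖ ^ 2) * P.α := by ring
      _ ≤ (2 * (P.ℓh + P.ℓ₃) ^ 2 * ‖P.z (k+2) - P.z (k+1)‖ ^ 2 +
            2 * P.ℓ₃ ^ 2 * ‖P.z (k+1) - P.z k‖ ^ 2) * P.α := by
          apply mul_le_mul_of_nonneg_right hdp hα.le
  simp only [BADMM.Lhat, BADMM.σ0]
  have e1 : (2 * (P.ℓh + P.ℓ₃) ^ 2 * ‖P.z (k+2) - P.z (k+1)‖ ^ 2 +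
        2 * P.ℓ₃ ^ 2 * ‖P.z (k+1) - P.z k‖ ^ 2) / (P.α * P.σC)
      = 2 * (P.ℓh + P.ℓ₃) ^ 2 / (P.α * P.σC) * ‖P.z (k+2) - P.z (k+1)‖ ^ 2 +
        2 * P.ℓ₃ ^ 2 / (P.α * P.σC) * ‖P.z (k+1) - P.z k‖ ^ 2 := by ring
  rw [e1] at hdp'
  have hzsq : (0:ℝ) ≤ ‖P.z (k+2) - P.z (k+1)‖ ^ 2 := sq_nonneg _
  nlinarith [hx, hy, hz, hp, hdp', hcoef, hzsq,
    mul_le_mul_of_nonneg_right hcoef hzsq,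
    sq_nonneg ‖P.x (k+2) - P.x (k+1)‖, sq_nonneg ‖P.y (k+2) - P.y (k+1)‖,
    mul_pos P.hμ₁_pos (by norm_num : (0:ℝ) < 1), P.hμ₁_pos.le, P.hμ₂_pos.le]

end MainLemmas

/-- if the primal iterates are bounded, then `(L̂(ŵ^k))_{k≥1}` is
nonincreasing and converges to a finite limit. -/
theorem badmm_Lhat_converges {n₁ n₂ n₃ m : ℕ} (P : BADMM n₁ n₂ n₃ m)
    (hbdd : ∃ M : ℝ, ∀ k : ℕ, ‖P.x k‖ ≤ M ∧ ‖P.y k‖ ≤ M ∧ ‖P.z k‖ ≤ M) :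
    (∀ k : ℕ, 1 ≤ k →
      P.Lhat (P.x (k+1)) (P.y (k+1)) (P.z (k+1)) (P.p (k+1)) (P.z k) ≤
        P.Lhat (P.x k) (P.y k) (P.z k) (P.p k) (P.z (k-1))) ∧
      ∃ c : ℝ, Tendsto
        (fun k : ℕ => P.Lhat (P.x (k+1)) (P.y (k+1)) (P.z (k+1)) (P.p (k+1)) (P.z k))
        atTop (nhds c) := by
  obtain ⟨M, hM⟩ := hbdd
  have hα := P.hα_pos
  have hσC := P.hσC_pos
  have hℓh := P.hℓh_nonneg
  have hℓ₃ := P.hℓ₃_nonneg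
  have hM0 : 0 ≤ M := le_trans (norm_nonneg _) (hM 0).1
  constructor
  · intro k hk
    obtain ⟨j, rfl⟩ : ∃ j, k = j + 1 := ⟨k - 1, (Nat.succ_pred_eq_of_pos hk).symm⟩
    simpa using badmm_Lhat_descent P j
  · -- lower bound data
    set K0 : ℝ := ‖P.h' 0‖ + P.ℓh * M + P.ℓ₃ * (M + M) with hK0
    set Pb : ℝ := Real.sqrt (K0 ^ 2 / P.σC) with hPbdef
    have hPb0 : 0 ≤ Pb := Real.sqrt_nonneg _
    have hpb : ∀ k : ℕ, ‖P.p (k+1)‖ ≤ Pb := by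
      intro k
      have hC := P.hC_rank (P.p (k+1))
      have hkey := badmm_key_opt P k
      have hn1 : ‖P.h' (P.z (k+1))‖ ≤ ‖P.h' 0‖ + P.ℓh * M := by
        have := P.hlip_h (P.z (k+1)) 0
        have h2 : ‖P.h' (P.z (k+1))‖ ≤ ‖P.h' (P.z (k+1)) - P.h' 0‖ + ‖P.h' 0‖ := by
          simpa using norm_add_le (P.h' (P.z (k+1)) - P.h' 0) (P.h' 0)
        have h3 : P.ℓh * ‖P.z (k+1) - 0‖ ≤ P.ℓh * M := by
          apply mul_le_mul_of_nonneg_left _ hℓh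
          simpa using (hM (k+1)).2.2
        linarith
      have hn2 : ‖P.φ₃' (P.z (k+1)) - P.φ₃' (P.z k)‖ ≤ P.ℓ₃ * (M + M) := by
        have h1 := P.hlip_φ₃ (P.z (k+1)) (P.z k)
        have h2 : ‖P.z (k+1) - P.z k‖ ≤ M + M :=
          le_trans (norm_sub_le _ _) (add_le_add (hM (k+1)).2.2 (hM k).2.2)
        have := mul_le_mul_of_nonneg_left h2 hℓ₃
        linarith
      have hnorm : ‖(ContinuousLinearMap.adjoint P.C) (P.p (k+1))‖ ≤ K0 := by
        rw [hkey]
        calc ‖P.φ₃' (P.z k) - P.h' (P.z (k+1)) - P.φ₃' (P.z (k+1))‖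
            = ‖-(P.h' (P.z (k+1))) - (P.φ₃' (P.z (k+1)) - P.φ₃' (P.z k))‖ := by
              congr 1; abel
          _ ≤ ‖-(P.h' (P.z (k+1)))‖ + ‖P.φ₃' (P.z (k+1)) - P.φ₃' (P.z k)‖ := norm_sub_le _ _
          _ ≤ (‖P.h' 0‖ + P.ℓh * M) + P.ℓ₃ * (M + M) := by
              rw [norm_neg]; exact add_le_add hn1 hn2
      have hsq : P.σC * ‖P.p (k+1)‖ ^ 2 ≤ K0 ^ 2 := by
        calc P.σC * ‖P.p (k+1)‖ ^ 2 ≤ ‖(ContinuousLinearMap.adjoint P.C) (P.p (k+1))‖ ^ 2 := hC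
          _ ≤ K0 ^ 2 := by
              apply pow_le_pow_left₀ (norm_nonneg _) hnorm
      apply Real.le_sqrt_of_sq_le
      rw [le_div_iff₀ hσC]
      linarith
    -- lower bounds for f, g, h on the compact ball
    obtain ⟨cf, hcf⟩ := lsc_bddBelow_compact P.hf_lsc (Metric.closedBall 0 M)
      (isCompact_closedBall 0 M)
    obtain ⟨cg, hcg⟩ := lsc_bddBelow_compact P.hg_lsc (Metric.closedBall 0 M)
      (isCompact_closedBall 0 M)
    have hh_cont : Continuous P.h := by
      have : Differentiable ℝ P.h := fun v => (P.hgrad_h v).hasFDerivAt.differentiableAt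
      exact this.continuous
    obtain ⟨ch, hch⟩ := lsc_bddBelow_compact hh_cont.lowerSemicontinuous
      (Metric.closedBall 0 M) (isCompact_closedBall 0 M)
    have hσ0 : 0 ≤ P.σ0 := by
      unfold BADMM.σ0; positivity
    -- the shifted sequence
    set t : ℕ → ℝ := fun j =>
      P.Lhat (P.x (j+2)) (P.y (j+2)) (P.z (j+2)) (P.p (j+2)) (P.z (j+1)) with htdef
    have hanti : Antitone t := antitone_nat_of_succ_le fun j => badmm_Lhat_descent P (j+1)
    have hlow : ∀ j : ℕ, cf + cg + ch - 2 * Pb ^ 2 / P.α ≤ t j := by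
      intro j
      have hbf := hcf _ (mem_closedBall_zero_iff.2 (hM (j+2)).1)
      have hbg := hcg _ (mem_closedBall_zero_iff.2 (hM (j+2)).2.1)
      have hbh := hch _ (mem_closedBall_zero_iff.2 (hM (j+2)).2.2)
      set r : Eu m := P.A (P.x (j+2)) + P.B (P.y (j+2)) + P.C (P.z (j+2)) with hrdef
      have hr : P.α • r = P.p (j+2) - P.p (j+1) := by
        rw [P.hp_upd (j+1)]; abel
      have hrn : P.α * ‖r‖ ≤ Pb + Pb := by
        have : ‖P.α • r‖ = P.α * ‖r‖ := by
          rw [norm_smul, Real.norm_of_nonneg hα.le]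
        rw [← this, hr]
        exact le_trans (norm_sub_le _ _) (add_le_add (hpb (j+1)) (hpb j))
      have hrn' : ‖r‖ ≤ (Pb + Pb) / P.α := by
        rw [le_div_iff₀ hα]; linarith [hrn]
      have hinner : -(2 * Pb ^ 2 / P.α) ≤ ⟪P.p (j+2), r⟫ := by
        have h1 : |⟪P.p (j+2), r⟫| ≤ ‖P.p (j+2)‖ * ‖r‖ := abs_real_inner_le_norm _ _
        have h2 : ‖P.p (j+2)‖ * ‖r‖ ≤ Pb * ((Pb + Pb) / P.α) := by
          apply mul_le_mul (hpb (j+1)) hrn' (norm_nonneg _) hPb0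
        have h3 : Pb * ((Pb + Pb) / P.α) = 2 * Pb ^ 2 / P.α := by ring
        have := neg_abs_le (⟪P.p (j+2), r⟫ : ℝ)
        linarith
      have hq : 0 ≤ P.α / 2 * ‖r‖ ^ 2 := by positivity
      have hz : 0 ≤ P.σ0 * ‖P.z (j+2) - P.z (j+1)‖ ^ 2 :=
        mul_nonneg hσ0 (sq_nonneg _)
      simp only [t, BADMM.Lhat, BADMM.L, Lag, ← hrdef]
      linarith
    have hc := tendsto_atTop_ciInf hanti ⟨cf + cg + ch - 2 * Pb ^ 2 / P.α,
      Set.forall_mem_range.2 hlow⟩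
    refine ⟨⨅ i, t i, ?_⟩
    exact (tendsto_add_atTop_iff_nat 1).1 hc
end
end

section
/- Under the standing assumptions on the 3-block Bregman ADMM, for every k ≥ 0 the function z ↦ L̂(x^{k+1}, y^{k+1}, z, p^{k+1}, z^k) is differentiable at z = z^{k+1} with gradient equal to ∇φ₃(z^k) − ∇φ₃(z^{k+1}) + Cᵀ(p^{k+1} − p^k) + 2σ₀(z^{k+1} − z^k); consequently the norm of this gradient is at most (ℓ₃ + 2σ₀)‖z^{k+1} − z^k‖ + ‖Cᵀ‖·‖p^{k+1} − p^k‖, where ‖Cᵀ‖ is the operator norm of Cᵀ. -/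
open RealInnerProductSpace Filter

noncomputable section

lemma grad_master {n m : ℕ} (c : ℝ) (h φp : Eu n → ℝ) (hg φg : Eu n) (z : Eu n)
    (hh : HasGradientAt h hg z) (hφ : HasGradientAt φp φg z)
    (C : Eu n →L[ℝ] Eu m) (p v : Eu m) (α : ℝ) :
    HasGradientAt (fun ζ => c + h ζ + ⟪p, v + C ζ⟫ + α / 2 * ‖v + C ζ‖ ^ 2 + φp ζ)
      (hg + (ContinuousLinearMap.adjoint C) p
        + α • (ContinuousLinearMap.adjoint C) (v + C z) + φg) z := by
  rw [hasGradientAt_iff_hasFDerivAt] at *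
  have h2 : HasFDerivAt (fun ζ : Eu n => v + C ζ) (C : Eu n →L[ℝ] Eu m) z :=
    C.hasFDerivAt.const_add v
  have h3 : HasFDerivAt (fun ζ : Eu n => ⟪p, v + C ζ⟫)
      ((innerSL ℝ p).comp C) z := by
    have := ((innerSL ℝ p).hasFDerivAt (x := v + C z)).comp z h2
    exact this
  have h4 := (h2.inner ℝ h2).const_mul (α / 2)
  have h4' : HasFDerivAt (fun ζ : Eu n => α / 2 * ‖v + C ζ‖ ^ 2)
      ((α / 2) • ((fderivInnerCLM ℝ (v + C z, v + C z)).comp (C.prod C))) z := by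
    simp only [← real_inner_self_eq_norm_sq]
    exact h4
  have := (((hh.const_add c).add h3).add h4').add hφ
  refine this.congr_fderiv ?_
  ext w
  simp only [ContinuousLinearMap.add_apply, InnerProductSpace.toDual_apply_apply,
    ContinuousLinearMap.coe_smul', Pi.smul_apply, ContinuousLinearMap.comp_apply,
    fderivInnerCLM_apply, ContinuousLinearMap.prod_apply, innerSL_apply_apply,
    ContinuousLinearMap.adjoint_inner_left, inner_add_left, real_inner_smul_left,
    smul_eq_mul]
  rw [real_inner_comm (v + C z) (C w), inner_add_left]
  ring

lemma grad_sq {n : ℕ} (σ : ℝ) (a z : Eu n) :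
    HasGradientAt (fun ζ => σ * ‖ζ - a‖ ^ 2) ((2 * σ) • (z - a)) z := by
  rw [hasGradientAt_iff_hasFDerivAt]
  have h2 : HasFDerivAt (fun ζ : Eu n => ζ - a) (ContinuousLinearMap.id ℝ (Eu n)) z :=
    (hasFDerivAt_id z).sub_const a
  have h4 := (h2.inner ℝ h2).const_mul σ
  have h4' : HasFDerivAt (fun ζ : Eu n => σ * ‖ζ - a‖ ^ 2)
      (σ • ((fderivInnerCLM ℝ (z - a, z - a)).comp
        ((ContinuousLinearMap.id ℝ (Eu n)).prod (ContinuousLinearMap.id ℝ (Eu n))))) z := by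
    simp only [← real_inner_self_eq_norm_sq]
    exact h4
  refine h4'.congr_fderiv ?_
  ext w
  simp only [ContinuousLinearMap.coe_smul', Pi.smul_apply, ContinuousLinearMap.comp_apply,
    fderivInnerCLM_apply, ContinuousLinearMap.prod_apply, ContinuousLinearMap.id_apply,
    InnerProductSpace.toDual_apply_apply, real_inner_smul_left, smul_eq_mul]
  rw [real_inner_comm (z - a) w]
  ring

lemma grad_breg {n : ℕ} (φ : Eu n → ℝ) (φ' : Eu n → Eu n) (a z : Eu n)
    (hφ : HasGradientAt φ (φ' z) z) :
    HasGradientAt (fun ζ => φ ζ - φ a - ⟪φ' a, ζ - a⟫) (φ' z - φ' a) z := by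
  rw [hasGradientAt_iff_hasFDerivAt] at *
  have h3 : HasFDerivAt (fun ζ : Eu n => ⟪φ' a, ζ - a⟫) (innerSL ℝ (φ' a)) z := by
    have := ((innerSL ℝ (φ' a)).hasFDerivAt (x := z - a)).comp z
      ((hasFDerivAt_id z).sub_const a)
    exact this
  refine ((hφ.sub_const (φ a)).sub h3).congr_fderiv ?_
  ext w
  simp [inner_sub_left]

set_option maxHeartbeats 1000000 in
/-- the partial gradient of `L̂` in `z` at the iterates, and its norm bound. -/
theorem badmm_Lhat_z_gradient {n₁ n₂ n₃ m : ℕ} (P : BADMM n₁ n₂ n₃ m) :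
    ∀ k : ℕ,
      HasGradientAt
        (fun ζ : Eu n₃ => P.Lhat (P.x (k+1)) (P.y (k+1)) ζ (P.p (k+1)) (P.z k))
        (P.φ₃' (P.z k) - P.φ₃' (P.z (k+1)) +
          (ContinuousLinearMap.adjoint P.C) (P.p (k+1) - P.p k) +
          (2 * P.σ0) • (P.z (k+1) - P.z k))
        (P.z (k+1)) ∧
      ‖P.φ₃' (P.z k) - P.φ₃' (P.z (k+1)) +
          (ContinuousLinearMap.adjoint P.C) (P.p (k+1) - P.p k) +
          (2 * P.σ0) • (P.z (k+1) - P.z k)‖ ≤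
        (P.ℓ₃ + 2 * P.σ0) * ‖P.z (k+1) - P.z k‖ +
          ‖(ContinuousLinearMap.adjoint P.C : Eu m →L[ℝ] Eu n₃)‖ * ‖P.p (k+1) - P.p k‖ := by
  intro k
  set x' := P.x (k+1)
  set y' := P.y (k+1)
  set zk := P.z k
  set z' := P.z (k+1)
  set pk := P.p k
  set pk1 := P.p (k+1)
  set v := P.A x' + P.B y' with hv
  set Ct := ContinuousLinearMap.adjoint P.C with hCt
  -- gradient of the z-subproblem objective at z'
  have hPhi : HasGradientAt
      (fun ζ : Eu n₃ => Lag P.f P.g P.h P.A P.B P.C P.α x' y' ζ pk + Breg P.φ₃ P.φ₃' ζ zk)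
      (P.h' z' + Ct pk + P.α • Ct (v + P.C z') + (P.φ₃' z' - P.φ₃' zk)) z' := by
    simp only [Lag, Breg]
    exact grad_master (P.f x' + P.g y') P.h _ (P.h' z') _ z' (P.hgrad_h z')
      (grad_breg P.φ₃ P.φ₃' zk z' (P.hgrad_φ₃ z')) P.C pk v P.α
  -- first-order optimality of the z-update
  have hmin : IsLocalMin
      (fun ζ : Eu n₃ => Lag P.f P.g P.h P.A P.B P.C P.α x' y' ζ pk + Breg P.φ₃ P.φ₃' ζ zk) z' :=
    Filter.Eventually.of_forall (fun ξ => P.hz_min k ξ)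
  have hG0 : P.h' z' + Ct pk + P.α • Ct (v + P.C z') + (P.φ₃' z' - P.φ₃' zk) = 0 := by
    have h0 := hmin.hasFDerivAt_eq_zero hPhi.hasFDerivAt
    have := congrArg (InnerProductSpace.toDual ℝ (Eu n₃)).symm h0
    simpa using this
  -- the p-update identity
  have e1 : P.α • Ct (v + P.C z') = Ct pk1 - Ct pk := by
    have hs : P.α • (v + P.C z') = pk1 - pk := by
      rw [show pk1 = pk + P.α • (P.A x' + P.B y' + P.C z') from P.hp_upd k]
      simp [hv, add_assoc]
    rw [← map_smul, hs, map_sub]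
  rw [e1] at hG0
  -- gradient of ζ ↦ L̂(x', y', ζ, p^{k+1}, z^k)
  have hPsi : HasGradientAt
      (fun ζ : Eu n₃ => P.Lhat x' y' ζ pk1 zk)
      (P.h' z' + Ct pk1 + P.α • Ct (v + P.C z') + (2 * P.σ0) • (z' - zk)) z' := by
    simp only [BADMM.Lhat, BADMM.L, Lag]
    exact grad_master (P.f x' + P.g y') P.h _ (P.h' z') _ z' (P.hgrad_h z')
      (grad_sq P.σ0 zk z') P.C pk1 v P.α
  rw [e1] at hPsi
  have heq : P.h' z' + Ct pk1 + (Ct pk1 - Ct pk) + (2 * P.σ0) • (z' - zk)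
      = P.φ₃' zk - P.φ₃' z' + Ct (pk1 - pk) + (2 * P.σ0) • (z' - zk) := by
    rw [map_sub]
    linear_combination (norm := module) hG0
  rw [heq] at hPsi
  refine ⟨hPsi, ?_⟩
  -- norm bound
  have hσ0 : 0 ≤ P.σ0 := by
    have := mul_pos P.hα_pos P.hσC_pos
    exact div_nonneg (by positivity) this.le
  have b1 : ‖P.φ₃' zk - P.φ₃' z'‖ ≤ P.ℓ₃ * ‖z' - zk‖ := by
    rw [norm_sub_rev] at *
    simpa [norm_sub_rev] using P.hlip_φ₃ zk z'
  have b2 : ‖Ct (pk1 - pk)‖ ≤ ‖(Ct : Eu m →L[ℝ] Eu n₃)‖ * ‖pk1 - pk‖ :=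
    Ct.le_opNorm _
  have b3 : ‖(2 * P.σ0) • (z' - zk)‖ = 2 * P.σ0 * ‖z' - zk‖ := by
    rw [norm_smul, Real.norm_eq_abs, abs_of_nonneg (by linarith : (0:ℝ) ≤ 2 * P.σ0)]
  calc ‖P.φ₃' zk - P.φ₃' z' + Ct (pk1 - pk) + (2 * P.σ0) • (z' - zk)‖
      ≤ ‖P.φ₃' zk - P.φ₃' z'‖ + ‖Ct (pk1 - pk)‖ + ‖(2 * P.σ0) • (z' - zk)‖ :=
        norm_add₃_le
    _ ≤ (P.ℓ₃ + 2 * P.σ0) * ‖z' - zk‖ + ‖(Ct : Eu m →L[ℝ] Eu n₃)‖ * ‖pk1 - pk‖ := by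
        rw [b3]; nlinarith [norm_nonneg (z' - zk)]
end
end

section
/- Let η > 0, σ₁ > 0, κ > 0, and let k₁ ≥ 2 be a natural number. Let (a_k), (b_k), (c_k) be sequences of nonnegative real numbers and (s_k) a nonincreasing sequence of real numbers with 0 < s_k < η for all k. Let Φ : [0, η) → ℝ be continuous with Φ(0) = 0, and suppose Φ is concave and differentiable on (0, η) with Φ′(t) > 0 for all t ∈ (0, η). Assume that for all k ≥ k₁: (i) σ₁(a_k² + b_k² + c_k²) ≤ s_k − s_{k+1}, and (ii) 1 ≤ κ·Φ′(s_k)·(a_{k−1} + b_{k−1} + c_{k−1} + c_{k−2}). Then the series ∑_{k=0}^∞ (a_k + b_k + c_k) converges (is finite). -/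
open Filter

/-- the abstract finite-length argument underlying the global convergence
proof of the 3-block Bregman ADMM under the Kurdyka–Łojasiewicz inequality. -/
theorem kl_finite_length (η σ₁ κ : ℝ) (hη : 0 < η) (hσ₁ : 0 < σ₁) (hκ : 0 < κ)
    (k₁ : ℕ) (hk₁ : 2 ≤ k₁)
    (a b c s : ℕ → ℝ)
    (ha : ∀ k, 0 ≤ a k) (hb : ∀ k, 0 ≤ b k) (hc : ∀ k, 0 ≤ c k)
    (hs_anti : ∀ k, s (k+1) ≤ s k)
    (hs_mem : ∀ k, 0 < s k ∧ s k < η)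
    (Φ Φ' : ℝ → ℝ)
    (hΦ_cont : ContinuousOn Φ (Set.Ico 0 η))
    (hΦ0 : Φ 0 = 0)
    (hΦ_concave : ConcaveOn ℝ (Set.Ioo 0 η) Φ)
    (hΦ_deriv : ∀ t ∈ Set.Ioo (0:ℝ) η, HasDerivAt Φ (Φ' t) t)
    (hΦ'_pos : ∀ t ∈ Set.Ioo (0:ℝ) η, 0 < Φ' t)
    (h1 : ∀ k, k₁ ≤ k → σ₁ * (a k ^ 2 + b k ^ 2 + c k ^ 2) ≤ s k - s (k+1))
    (h2 : ∀ k, k₁ ≤ k → 1 ≤ κ * Φ' (s k) * (a (k-1) + b (k-1) + c (k-1) + c (k-2))) :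
    Summable (fun k : ℕ => a k + b k + c k) := by
  have hsIoo : ∀ k, s k ∈ Set.Ioo (0:ℝ) η := fun k => ⟨(hs_mem k).1, (hs_mem k).2⟩
  set u : ℕ → ℝ := fun k => a k + b k + c k with hu_def
  have hu0 : ∀ k, 0 ≤ u k := fun k =>
    add_nonneg (add_nonneg (ha k) (hb k)) (hc k)
  clear_value u
  -- Φ is positive at each s k
  have hmono : StrictMonoOn Φ (Set.Ico 0 η) := by
    apply strictMonoOn_of_deriv_pos (convex_Ico 0 η) hΦ_cont
    intro x hx
    rw [interior_Ico] at hx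
    rw [(hΦ_deriv x hx).deriv]
    exact hΦ'_pos x hx
  have hΦpos : ∀ k, 0 < Φ (s k) := by
    intro k
    have h := hmono (Set.mem_Ico.2 ⟨le_refl 0, hη⟩)
      (Set.mem_Ico.2 ⟨(hs_mem k).1.le, (hs_mem k).2⟩) (hs_mem k).1
    rwa [hΦ0] at h
  -- concavity gradient inequality
  have hgrad : ∀ k, Φ' (s k) * (s k - s (k+1)) ≤ Φ (s k) - Φ (s (k+1)) := by
    intro k
    rcases eq_or_lt_of_le (hs_anti k) with h | h
    · rw [h]; simp
    · have hcv : ConvexOn ℝ (Set.Ioo (0:ℝ) η) (-Φ) := hΦ_concave.neg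
      have hd : HasDerivAt (-Φ) (-(Φ' (s k))) (s k) := (hΦ_deriv (s k) (hsIoo k)).neg
      have hsl := hcv.slope_le_of_hasDerivAt (hsIoo (k+1)) (hsIoo k) h hd
      rw [slope_def_field] at hsl
      have hpos : (0:ℝ) < s k - s (k+1) := sub_pos.2 h
      rw [div_le_iff₀ hpos] at hsl
      simp only [Pi.neg_apply] at hsl
      nlinarith
  set M : ℝ := 3 * κ / σ₁ with hM_def
  have hM0 : 0 ≤ M := by positivity
  clear_value M
  -- key per-step inequality
  have hkey : ∀ k, k₁ ≤ k →
      u k ≤ 2 * M * (Φ (s k) - Φ (s (k+1))) + (u (k-1) + u (k-2)) / 8 := by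
    intro k hk
    set P := Φ' (s k) with hP_def
    have hP : 0 < P := hΦ'_pos (s k) (hsIoo k)
    clear_value P
    set S := a k ^ 2 + b k ^ 2 + c k ^ 2 with hS_def
    have hS0 : 0 ≤ S := by positivity
    clear_value S
    set Δ := Φ (s k) - Φ (s (k+1)) with hΔ_def
    clear_value Δ
    have hA : P * (σ₁ * S) ≤ Δ := by
      rw [hP_def, hS_def, hΔ_def]
      exact le_trans
        (mul_le_mul_of_nonneg_left (h1 k hk) (hΦ'_pos (s k) (hsIoo k)).le) (hgrad k)
    have hΔ0 : 0 ≤ Δ := le_trans (mul_nonneg hP.le (mul_nonneg hσ₁.le hS0)) hA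
    set v := a (k-1) + b (k-1) + c (k-1) + c (k-2) with hv_def
    clear_value v
    have hv0 : 0 ≤ v := by
      have := ha (k-1); have := hb (k-1); have := hc (k-1); have := hc (k-2)
      linarith
    have h2k : 1 ≤ κ * P * v := by rw [hP_def, hv_def]; exact h2 k hk
    have h3 : P * (σ₁ * S) ≤ P * (κ * v * Δ) := by
      have hmul : Δ * 1 ≤ Δ * (κ * P * v) := mul_le_mul_of_nonneg_left h2k hΔ0
      nlinarith
    have h4 : σ₁ * S ≤ κ * v * Δ := le_of_mul_le_mul_left h3 hP
    have husq : u k ^ 2 ≤ 3 * S := by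
      simp only [hu_def, hS_def]
      nlinarith [sq_nonneg (a k - b k), sq_nonneg (b k - c k), sq_nonneg (a k - c k)]
    set w := u (k-1) + u (k-2) with hw_def
    clear_value w
    have hw0 : 0 ≤ w := by rw [hw_def]; exact add_nonneg (hu0 _) (hu0 _)
    have hvw : v ≤ w := by
      simp only [hw_def, hv_def, hu_def]
      have := ha (k-2); have := hb (k-2)
      linarith
    have hu2 : u k ^ 2 ≤ M * Δ * w := by
      have h5 : u k ^ 2 ≤ (3 / σ₁) * (κ * v * Δ) := by
        have h6 : (3 / σ₁) * (σ₁ * S) ≤ (3 / σ₁) * (κ * v * Δ) :=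
          mul_le_mul_of_nonneg_left h4 (by positivity)
        have h7 : (3 / σ₁) * (σ₁ * S) = 3 * S := by field_simp
        linarith
      have h8 : 0 ≤ 3 * κ / σ₁ * Δ := mul_nonneg (by positivity) hΔ0
      calc u k ^ 2 ≤ (3 / σ₁) * (κ * v * Δ) := h5
        _ = (3 * κ / σ₁ * Δ) * v := by ring
        _ ≤ (3 * κ / σ₁ * Δ) * w := mul_le_mul_of_nonneg_left hvw h8
        _ = M * Δ * w := by rw [hM_def]
    -- AM-GM finish
    have hT0 : 0 ≤ 2 * M * Δ + w / 8 := by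
      have := mul_nonneg hM0 hΔ0; linarith
    have hsq : u k ^ 2 ≤ (2 * M * Δ + w / 8) ^ 2 := by
      have hMΔ : 0 ≤ M * Δ := mul_nonneg hM0 hΔ0
      nlinarith [sq_nonneg (2 * M * Δ - w / 8)]
    exact (pow_le_pow_iff_left₀ (hu0 k) hT0 two_ne_zero).1 hsq
  -- summation machinery
  set A : ℕ → ℝ := fun n => ∑ k ∈ Finset.range n, u (k₁ + k) with hA_def
  clear_value A
  have hA0 : ∀ n, 0 ≤ A n := by
    intro n
    rw [hA_def]
    exact Finset.sum_nonneg fun k _ => hu0 _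
  have hAmono : ∀ m n, m ≤ n → A m ≤ A n := by
    intro m n hmn
    rw [hA_def]
    exact Finset.sum_le_sum_of_subset_of_nonneg (Finset.range_subset_range.2 hmn)
      (fun k _ _ => hu0 _)
  set B₁ : ℕ → ℝ := fun n => ∑ k ∈ Finset.range n, u (k₁ + k - 1) with hB₁_def
  set B₂ : ℕ → ℝ := fun n => ∑ k ∈ Finset.range n, u (k₁ + k - 2) with hB₂_def
  clear_value B₁ B₂
  have hB₁succ : ∀ n, B₁ (n+1) = A n + u (k₁ - 1) := by
    intro n
    simp only [hB₁_def, hA_def]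
    rw [Finset.sum_range_succ']
    have e1 : ∀ k : ℕ, k₁ + (k+1) - 1 = k₁ + k := fun k => by omega
    have e2 : k₁ + 0 - 1 = k₁ - 1 := by omega
    simp only [e1, e2]
  have hB₂succ : ∀ n, B₂ (n+1) = B₁ n + u (k₁ - 2) := by
    intro n
    simp only [hB₂_def, hB₁_def]
    rw [Finset.sum_range_succ']
    have e1 : ∀ k : ℕ, k₁ + (k+1) - 2 = k₁ + k - 1 := fun k => by omega
    have e2 : k₁ + 0 - 2 = k₁ - 2 := by omega
    simp only [e1, e2]
  have hB₁le : ∀ n, B₁ n ≤ u (k₁ - 1) + A n := by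
    intro n
    cases n with
    | zero => simpa [hB₁_def] using add_nonneg (hu0 _) (hA0 0)
    | succ m =>
      rw [hB₁succ m]
      have := hAmono m (m+1) (Nat.le_succ m)
      linarith
  have hB₂le : ∀ n, B₂ n ≤ u (k₁ - 2) + u (k₁ - 1) + A n := by
    intro n
    cases n with
    | zero =>
      simp only [hB₂_def, Finset.range_zero, Finset.sum_empty]
      have := hu0 (k₁ - 2); have := hu0 (k₁ - 1); have := hA0 0
      linarith
    | succ m =>
      rw [hB₂succ m]
      have h := hB₁le m
      have := hAmono m (m+1) (Nat.le_succ m)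
      linarith
  -- main estimate by induction
  have hL1 : ∀ n, A n ≤ 2 * M * (Φ (s k₁) - Φ (s (k₁ + n))) + (1/8) * (B₁ n + B₂ n) := by
    intro n
    induction n with
    | zero => simp [hA_def, hB₁_def, hB₂_def]
    | succ n ih =>
      have hk := hkey (k₁ + n) (Nat.le_add_right k₁ n)
      have hAstep : A (n+1) = A n + u (k₁ + n) := by
        simp [hA_def, Finset.sum_range_succ]
      have hB₁step : B₁ (n+1) = B₁ n + u (k₁ + n - 1) := by
        simp [hB₁_def, Finset.sum_range_succ]
      have hB₂step : B₂ (n+1) = B₂ n + u (k₁ + n - 2) := by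
        simp [hB₂_def, Finset.sum_range_succ]
      have hidx : k₁ + (n+1) = (k₁ + n) + 1 := rfl
      rw [hAstep, hB₁step, hB₂step, hidx]
      linarith
  -- uniform bound on A
  set C : ℝ := (4/3) * (2 * M * Φ (s k₁) + (1/8) * (2 * u (k₁ - 1) + u (k₁ - 2))) with hC_def
  clear_value C
  have hAbound : ∀ n, A n ≤ C := by
    intro n
    have h := hL1 n
    have hΦn : 0 < Φ (s (k₁ + n)) := hΦpos _
    have hb1 := hB₁le n
    have hb2 := hB₂le n
    have hμ : 2 * M * (Φ (s k₁) - Φ (s (k₁ + n))) ≤ 2 * M * Φ (s k₁) := by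
      have h9 : Φ (s k₁) - Φ (s (k₁ + n)) ≤ Φ (s k₁) := by linarith
      exact mul_le_mul_of_nonneg_left h9 (by linarith : (0:ℝ) ≤ 2 * M)
    rw [hC_def]
    linarith
  have hC0 : 0 ≤ C := le_trans (hA0 0) (hAbound 0)
  -- conclude summability
  apply summable_of_sum_range_le (c := (∑ k ∈ Finset.range k₁, u k) + C)
  · exact hu0
  · intro n
    rcases le_or_gt n k₁ with hn | hn
    · have h := Finset.sum_le_sum_of_subset_of_nonneg (Finset.range_subset_range.2 hn)
        (fun k _ _ => hu0 k)
      calc (∑ k ∈ Finset.range n, u k) ≤ ∑ k ∈ Finset.range k₁, u k := h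
        _ ≤ (∑ k ∈ Finset.range k₁, u k) + C := by linarith
    · obtain ⟨m, rfl⟩ := Nat.exists_eq_add_of_le hn.le
      rw [Finset.sum_range_add]
      have := hAbound m
      simp only [hA_def] at this
      linarith
end
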